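/- Right multiplication of the combining matrix by an invertible matrix does not change the achievable SE: for V ∈ ℂ^{M×N}, invertible T ∈ ℂ^{N×N}, Ĥ ∈ ℂ^{M×N}, Hermitian positive definite Ξ ∈ ℂ^{M×M}, and Hermitian PSD P, if V^H Ξ V is invertible then log₂ det(I_N + P^{1/2}Ĥ^H (VT) ((VT)^H Ξ (VT))^{-1} (VT)^H Ĥ P^{1/2}) = log₂ det(I_N + P^{1/2}Ĥ^H V (V^H Ξ V)^{-1} V^H Ĥ P^{1/2}). -/

import Mathlib

open Matrix ComplexOrder

/-- The positive semidefinite square root of a positive semidefinite matrix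
(the definition of `Matrix.PosSemidef.sqrt` in the older Mathlib). -/
noncomputable def Matrix.PosSemidef.sqrt {n : Type*} [Fintype n] [DecidableEq n]
    {𝕜 : Type*} [RCLike 𝕜] {A : Matrix n n 𝕜} (hA : A.PosSemidef) : Matrix n n 𝕜 :=
  hA.1.eigenvectorUnitary.1 * diagonal ((↑) ∘ (√·) ∘ hA.1.eigenvalues) *
  (star hA.1.eigenvectorUnitary : Matrix n n 𝕜)

/-- Right multiplication of the combining matrix by an invertible matrix does not
change the achievable SE. -/
theorem stmt14 (M N : ℕ) (Hh V : Matrix (Fin M) (Fin N) ℂ)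
    (T : Matrix (Fin N) (Fin N) ℂ) (hT : IsUnit T)
    (Xi : Matrix (Fin M) (Fin M) ℂ) (hXi : Xi.PosDef)
    (P : Matrix (Fin N) (Fin N) ℂ) (hP : P.PosSemidef)
    (hV : IsUnit (Vᴴ * Xi * V)) :
    Real.logb 2
      ((1 + hP.sqrt * Hhᴴ * (V * T) * ((V * T)ᴴ * Xi * (V * T))⁻¹ * (V * T)ᴴ * Hh *
          hP.sqrt).det.re) =
    Real.logb 2
      ((1 + hP.sqrt * Hhᴴ * V * (Vᴴ * Xi * V)⁻¹ * Vᴴ * Hh * hP.sqrt).det.re) := by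
  have hTdet : IsUnit T.det := (Matrix.isUnit_iff_isUnit_det T).mp hT
  have hTHdet : IsUnit Tᴴ.det := by
    rw [Matrix.det_conjTranspose]
    exact hTdet.star
  have key : V * T * ((V * T)ᴴ * Xi * (V * T))⁻¹ * (V * T)ᴴ
      = V * (Vᴴ * Xi * V)⁻¹ * Vᴴ := by
    have h1 : (V * T)ᴴ * Xi * (V * T) = Tᴴ * (Vᴴ * Xi * V) * T := by
      simp [Matrix.conjTranspose_mul, Matrix.mul_assoc]
    rw [h1, Matrix.mul_inv_rev, Matrix.mul_inv_rev, Matrix.conjTranspose_mul]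
    calc V * T * (T⁻¹ * ((Vᴴ * Xi * V)⁻¹ * Tᴴ⁻¹)) * (Tᴴ * Vᴴ)
        = V * (T * T⁻¹) * (Vᴴ * Xi * V)⁻¹ * (Tᴴ⁻¹ * Tᴴ) * Vᴴ := by
          simp only [Matrix.mul_assoc]
      _ = V * (Vᴴ * Xi * V)⁻¹ * Vᴴ := by
          rw [Matrix.mul_nonsing_inv _ hTdet, Matrix.nonsing_inv_mul _ hTHdet]
          simp [Matrix.mul_assoc]
  have : hP.sqrt * Hhᴴ * (V * T) * ((V * T)ᴴ * Xi * (V * T))⁻¹ * (V * T)ᴴ * Hh * hP.sqrt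
      = hP.sqrt * Hhᴴ * V * (Vᴴ * Xi * V)⁻¹ * Vᴴ * Hh * hP.sqrt := by
    calc hP.sqrt * Hhᴴ * (V * T) * ((V * T)ᴴ * Xi * (V * T))⁻¹ * (V * T)ᴴ * Hh * hP.sqrt
        = hP.sqrt * Hhᴴ * (V * T * ((V * T)ᴴ * Xi * (V * T))⁻¹ * (V * T)ᴴ) * Hh * hP.sqrt := by
          simp only [Matrix.mul_assoc]
      _ = hP.sqrt * Hhᴴ * (V * (Vᴴ * Xi * V)⁻¹ * Vᴴ) * Hh * hP.sqrt := by rw [key]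
      _ = hP.sqrt * Hhᴴ * V * (Vᴴ * Xi * V)⁻¹ * Vᴴ * Hh * hP.sqrt := by
          simp only [Matrix.mul_assoc]
  rw [this]
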